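/- Let Γ be a group. If V_1 ⊆ Γ^{d_1} and V_2 ⊆ Γ^{d_2} are irreducible varieties over Γ, then the product V_1 × V_2 ⊆ Γ^{d_1+d_2} is an irreducible variety. -/
import Mathlib


/-- The group of `Γ`-words in `d` variables: the free product `Γ ∗ F(x₁,…,x_d)`. -/
abbrev GWord (Γ : Type) [Group Γ] (d : ℕ) : Type := Monoid.Coprod Γ (FreeGroup (Fin d))

/-- Evaluation of `Γ`-words at a point of `Γ^d`: the homomorphism which is the identity
on `Γ` and sends the `i`-th variable to `v i`. -/
def evalWord {Γ : Type} [Group Γ] {d : ℕ} (v : Fin d → Γ) : GWord Γ d →* Γ :=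
  Monoid.Coprod.lift (MonoidHom.id Γ) (FreeGroup.lift v)

/-- The variety defined by a set `S` of `Γ`-words. -/
def varietyOf {Γ : Type} [Group Γ] {d : ℕ} (S : Set (GWord Γ d)) : Set (Fin d → Γ) :=
  { v | ∀ w ∈ S, evalWord v w = 1 }

/-- A subset of `Γ^d` is a variety if it is the common zero set of a set of `Γ`-words. -/
def IsVariety {Γ : Type} [Group Γ] {d : ℕ} (V : Set (Fin d → Γ)) : Prop :=
  ∃ S : Set (GWord Γ d), V = varietyOf S

/-- The homomorphism sending a `Γ`-word to the function it defines on `V`. -/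
def wordEval {Γ : Type} [Group Γ] {d : ℕ} (V : Set (Fin d → Γ)) : GWord Γ d →* (↥V → Γ) :=
  Pi.monoidHom fun v => evalWord (v : Fin d → Γ)

/-- The group `L_V` of word maps on `V`, as a subgroup of the group of all
functions `V → Γ` (with pointwise multiplication). -/
def LV {Γ : Type} [Group Γ] {d : ℕ} (V : Set (Fin d → Γ)) : Subgroup (↥V → Γ) :=
  (wordEval V).range

/-- The constant functions, as a homomorphism `Γ →* L_V`. -/
def LV.const {Γ : Type} [Group Γ] {d : ℕ} (V : Set (Fin d → Γ)) : Γ →* ↥(LV V) :=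
  (wordEval V).rangeRestrict.comp Monoid.Coprod.inl

/-- The `i`-th coordinate function, an element of `L_V`. -/
def LV.coord {Γ : Type} [Group Γ] {d : ℕ} (V : Set (Fin d → Γ)) (i : Fin d) : ↥(LV V) :=
  (wordEval V).rangeRestrict (Monoid.Coprod.inr (FreeGroup.of i))

/-- The evaluation homomorphism `h_v : L_V →* Γ` at a point `v ∈ V`. -/
def evalAt {Γ : Type} [Group Γ] {d : ℕ} (V : Set (Fin d → Γ)) (v : ↥V) : ↥(LV V) →* Γ :=
  (Pi.evalMonoidHom (fun _ : ↥V => Γ) v).comp (LV V).subtype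

/-- A family of homomorphisms `L →* Γ` is discriminating if every finite subset of `L`
is mapped injectively by some member of the family. -/
def IsDiscriminating {Γ L : Type} [Group Γ] [Group L] (H : Set (L →* Γ)) : Prop :=
  ∀ F : Finset L, ∃ h ∈ H, Set.InjOn h (F : Set L)

/-- A nonempty variety is irreducible if whenever it is a finite union of subvarieties,
one of them is the whole variety. -/
def IsIrreducibleVariety {Γ : Type} [Group Γ] {d : ℕ} (V : Set (Fin d → Γ)) : Prop :=
  IsVariety V ∧ V.Nonempty ∧
    ∀ (n : ℕ) (W : Fin n → Set (Fin d → Γ)),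
      (∀ k, IsVariety (W k)) → (∀ k, W k ⊆ V) → V = ⋃ k, W k → ∃ k, W k = V

/-- A map between varieties is algebraic if each of its coordinates is a word map. -/
def IsAlgebraicMap {Γ : Type} [Group Γ] {d d' : ℕ} (V : Set (Fin d → Γ))
    (V' : Set (Fin d' → Γ)) (F : ↥V → ↥V') : Prop :=
  ∀ i : Fin d', ∃ w : GWord Γ d, ∀ v : ↥V, (F v : Fin d' → Γ) i = evalWord (v : Fin d → Γ) w

/-- A variety is homogeneous if its algebraic automorphisms act transitively. -/
def IsHomogeneous {Γ : Type} [Group Γ] {d : ℕ} (V : Set (Fin d → Γ)) : Prop :=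
  ∀ v v' : ↥V, ∃ F : ↥V ≃ ↥V,
    IsAlgebraicMap V V ⇑F ∧ IsAlgebraicMap V V ⇑F.symm ∧ F v = v'

/-- An algebraic group over `Γ`: a nonempty variety `V ⊆ Γ^d` with a group law
whose coordinates are word maps on `V × V`. -/
structure AlgGroup (Γ : Type) [Group Γ] (d : ℕ) where
  carrier : Set (Fin d → Γ)
  isVariety : IsVariety carrier
  mul : ↥carrier → ↥carrier → ↥carrier
  one : ↥carrier
  inv : ↥carrier → ↥carrier
  mul_assoc : ∀ a b c, mul (mul a b) c = mul a (mul b c)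
  one_mul : ∀ a, mul one a = a
  mul_one : ∀ a, mul a one = a
  inv_mul : ∀ a, mul (inv a) a = one
  algebraic : ∀ i : Fin d, ∃ w : GWord Γ (d + d), ∀ a b : ↥carrier,
    (mul a b : Fin d → Γ) i = evalWord (Fin.append (a : Fin d → Γ) (b : Fin d → Γ)) w

/-- The group structure on the points of an algebraic group. -/
instance AlgGroup.group {Γ : Type} [Group Γ] {d : ℕ} (G : AlgGroup Γ d) :
    Group ↥G.carrier where
  mul := G.mul
  one := G.one
  inv := G.inv
  mul_assoc := G.mul_assoc
  one_mul := G.one_mul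
  mul_one := G.mul_one
  inv_mul_cancel := G.inv_mul

/-- The `Γ`-generating set of `L_V` consisting of the coordinate functions, their
inverses, and the nontrivial constants. -/
def LV.genSet {Γ : Type} [Group Γ] {d : ℕ} (V : Set (Fin d → Γ)) : Set ↥(LV V) :=
  {f | (∃ i, f = LV.coord V i ∨ f = (LV.coord V i)⁻¹) ∨ ∃ γ : Γ, γ ≠ 1 ∧ f = LV.const V γ}

/-- The length of an element of `L_V`: the minimal length of a word in the coordinate
functions, their inverses, and nontrivial constants representing it. -/
noncomputable def LV.len {Γ : Type} [Group Γ] {d : ℕ} (V : Set (Fin d → Γ))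
    (f : ↥(LV V)) : ℕ :=
  sInf {n | ∃ l : List ↥(LV V), l.length = n ∧ (∀ g ∈ l, g ∈ LV.genSet V) ∧ l.prod = f}
/-- The product of two subsets of `Γ^{d₁}` and `Γ^{d₂}`, as a subset of `Γ^{d₁+d₂}`. -/
def prodSet {Γ : Type} [Group Γ] {d₁ d₂ : ℕ} (V₁ : Set (Fin d₁ → Γ))
    (V₂ : Set (Fin d₂ → Γ)) : Set (Fin (d₁ + d₂) → Γ) :=
  {v | (fun i => v (Fin.castAdd d₂ i)) ∈ V₁ ∧ (fun i => v (Fin.natAdd d₁ i)) ∈ V₂}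


section Aux

variable {Γ : Type} [Group Γ] {d d' : ℕ}

lemma evalWord_inl (v : Fin d → Γ) (γ : Γ) : evalWord v (Monoid.Coprod.inl γ) = γ :=
  Monoid.Coprod.lift_apply_inl _ _ _

lemma evalWord_inr_of (v : Fin d → Γ) (i : Fin d) :
    evalWord v (Monoid.Coprod.inr (FreeGroup.of i)) = v i := by
  rw [evalWord, Monoid.Coprod.lift_apply_inr, FreeGroup.lift_apply_of]

/-- Substitution homomorphism between word groups. -/
def wsubst (f : Fin d → GWord Γ d') : GWord Γ d →* GWord Γ d' :=
  Monoid.Coprod.lift Monoid.Coprod.inl (FreeGroup.lift f)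

lemma evalWord_wsubst (v : Fin d' → Γ) (f : Fin d → GWord Γ d') (w : GWord Γ d) :
    evalWord v (wsubst f w) = evalWord (fun i => evalWord v (f i)) w := by
  have : (evalWord v).comp (wsubst f) = evalWord (fun i => evalWord v (f i)) := by
    apply Monoid.Coprod.hom_ext
    · rfl
    · ext i
      simp [wsubst, evalWord, Monoid.Coprod.lift_apply_inr, FreeGroup.lift_apply_of]
  exact DFunLike.congr_fun this w

lemma mem_varietyOf_union (v : Fin d → Γ) (A B : Set (GWord Γ d)) :
    v ∈ varietyOf (A ∪ B) ↔ v ∈ varietyOf A ∧ v ∈ varietyOf B := by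
  simp [varietyOf, or_imp, forall_and]

lemma mem_varietyOf_image (v : Fin d' → Γ) (f : Fin d → GWord Γ d') (T : Set (GWord Γ d)) :
    v ∈ varietyOf (wsubst f '' T) ↔ (fun i => evalWord v (f i)) ∈ varietyOf T := by
  simp [varietyOf, evalWord_wsubst]

lemma mem_varietyOf_biUnion {α : Type*} (v : Fin d → Γ) (P : Set α)
    (T : α → Set (GWord Γ d)) :
    v ∈ varietyOf (⋃ x ∈ P, T x) ↔ ∀ x ∈ P, v ∈ varietyOf (T x) := by
  simp only [varietyOf, Set.mem_setOf_eq, Set.mem_iUnion, exists_prop]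
  exact ⟨fun h x hx w hw => h w ⟨x, hx, hw⟩, fun h w ⟨x, hx, hw⟩ => h x hx w hw⟩

omit [Group Γ] in
lemma append_comp (v : Fin (d + d') → Γ) :
    Fin.append (fun i => v (Fin.castAdd d' i)) (fun j => v (Fin.natAdd d j)) = v := by
  funext i
  refine Fin.addCases (fun i => ?_) (fun j => ?_) i
  · rw [Fin.append_left]
  · rw [Fin.append_right]

variable {d₁ d₂ : ℕ}

/-- Substituting constants for the second block of variables. -/
def pairWord₁ (v₂ : Fin d₂ → Γ) : Fin (d₁ + d₂) → GWord Γ d₁ :=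
  Fin.addCases (fun i => Monoid.Coprod.inr (FreeGroup.of i))
    (fun j => Monoid.Coprod.inl (v₂ j))

/-- Substituting constants for the first block of variables. -/
def pairWord₂ (v₁ : Fin d₁ → Γ) : Fin (d₁ + d₂) → GWord Γ d₂ :=
  Fin.addCases (fun i => Monoid.Coprod.inl (v₁ i))
    (fun j => Monoid.Coprod.inr (FreeGroup.of j))

lemma eval_pairWord₁ (v₁ : Fin d₁ → Γ) (v₂ : Fin d₂ → Γ) :
    (fun i => evalWord v₁ (pairWord₁ v₂ i)) = Fin.append v₁ v₂ := by
  funext i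
  refine Fin.addCases (fun i => ?_) (fun j => ?_) i
  · rw [Fin.append_left]
    simp [pairWord₁, evalWord_inr_of]
  · rw [Fin.append_right]
    simp [pairWord₁, evalWord_inl]

lemma eval_pairWord₂ (v₁ : Fin d₁ → Γ) (v₂ : Fin d₂ → Γ) :
    (fun i => evalWord v₂ (pairWord₂ v₁ i)) = Fin.append v₁ v₂ := by
  funext i
  refine Fin.addCases (fun i => ?_) (fun j => ?_) i
  · rw [Fin.append_left]
    simp [pairWord₂, evalWord_inl]
  · rw [Fin.append_right]
    simp [pairWord₂, evalWord_inr_of]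

end Aux

/-- the product of two irreducible varieties is an irreducible variety. -/
theorem stmt_5 {Γ : Type} [Group Γ] {d₁ d₂ : ℕ} (V₁ : Set (Fin d₁ → Γ))
    (V₂ : Set (Fin d₂ → Γ)) (h₁ : IsIrreducibleVariety V₁)
    (h₂ : IsIrreducibleVariety V₂) :
    IsIrreducibleVariety (prodSet V₁ V₂) := by
  obtain ⟨⟨S₁, hS₁⟩, ⟨p₁, hp₁⟩, hirr₁⟩ := h₁
  obtain ⟨⟨S₂, hS₂⟩, ⟨p₂, hp₂⟩, hirr₂⟩ := h₂
  have happ_mem : ∀ (v₁ : Fin d₁ → Γ) (v₂ : Fin d₂ → Γ), v₁ ∈ V₁ → v₂ ∈ V₂ →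
      Fin.append v₁ v₂ ∈ prodSet V₁ V₂ := by
    intro v₁ v₂ hv₁ hv₂
    constructor
    · simpa only [Fin.append_left] using hv₁
    · simpa only [Fin.append_right] using hv₂
  refine ⟨?_, ?_, ?_⟩
  · -- the product is a variety
    refine ⟨wsubst (fun i => Monoid.Coprod.inr (FreeGroup.of (Fin.castAdd d₂ i))) '' S₁ ∪
      wsubst (fun j => Monoid.Coprod.inr (FreeGroup.of (Fin.natAdd d₁ j))) '' S₂, ?_⟩
    ext v
    rw [mem_varietyOf_union, mem_varietyOf_image, mem_varietyOf_image]
    simp only [evalWord_inr_of]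
    rw [prodSet, Set.mem_setOf_eq, hS₁, hS₂]
  · exact ⟨Fin.append p₁ p₂, happ_mem p₁ p₂ hp₁ hp₂⟩
  · intro n W hWvar hWsub hWu
    choose S hS using hWvar
    -- characterization of slice varieties
    have hslice : ∀ (v₁ : Fin d₁ → Γ) (v₂ : Fin d₂ → Γ) (k : Fin n),
        v₂ ∈ varietyOf (wsubst (pairWord₂ v₁) '' S k) ↔ Fin.append v₁ v₂ ∈ W k := by
      intro v₁ v₂ k
      rw [mem_varietyOf_image, eval_pairWord₂, hS k]
    have hUmem : ∀ (k : Fin n) (v₁ : Fin d₁ → Γ),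
        v₁ ∈ varietyOf (S₁ ∪ ⋃ v₂ ∈ V₂, wsubst (pairWord₁ v₂) '' S k) ↔
          v₁ ∈ V₁ ∧ ∀ v₂ ∈ V₂, Fin.append v₁ v₂ ∈ W k := by
      intro k v₁
      rw [mem_varietyOf_union, mem_varietyOf_biUnion, ← hS₁]
      refine and_congr Iff.rfl (forall₂_congr fun v₂ hv₂ => ?_)
      rw [mem_varietyOf_image, eval_pairWord₁, hS k]
    have cover : ∀ v₁ ∈ V₁, ∃ k, ∀ v₂ ∈ V₂, Fin.append v₁ v₂ ∈ W k := by
      intro v₁ hv₁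
      have hsub₂ : ∀ k : Fin n,
          varietyOf (S₂ ∪ wsubst (pairWord₂ v₁) '' S k) ⊆ V₂ := by
        intro k v₂ hv₂
        rw [mem_varietyOf_union] at hv₂
        rw [hS₂]
        exact hv₂.1
      have hun₂ : V₂ = ⋃ k, varietyOf (S₂ ∪ wsubst (pairWord₂ v₁) '' S k) := by
        ext v₂
        simp only [Set.mem_iUnion]
        constructor
        · intro hv₂
          have hp : Fin.append v₁ v₂ ∈ prodSet V₁ V₂ := happ_mem v₁ v₂ hv₁ hv₂
          rw [hWu] at hp
          obtain ⟨k, hk⟩ := Set.mem_iUnion.1 hp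
          refine ⟨k, ?_⟩
          rw [mem_varietyOf_union]
          exact ⟨by rw [← hS₂]; exact hv₂, (hslice v₁ v₂ k).2 hk⟩
        · rintro ⟨k, hk⟩
          exact hsub₂ k hk
      obtain ⟨k, hk⟩ := hirr₂ n
        (fun k => varietyOf (S₂ ∪ wsubst (pairWord₂ v₁) '' S k))
        (fun k => ⟨_, rfl⟩) hsub₂ hun₂
      refine ⟨k, fun v₂ hv₂ => ?_⟩
      have hmem : v₂ ∈ varietyOf (S₂ ∪ wsubst (pairWord₂ v₁) '' S k) := hk.symm ▸ hv₂
      rw [mem_varietyOf_union] at hmem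
      exact (hslice v₁ v₂ k).1 hmem.2
    have hun₁ : V₁ = ⋃ k, varietyOf (S₁ ∪ ⋃ v₂ ∈ V₂, wsubst (pairWord₁ v₂) '' S k) := by
      ext v₁
      simp only [Set.mem_iUnion]
      constructor
      · intro hv₁
        obtain ⟨k, hk⟩ := cover v₁ hv₁
        exact ⟨k, (hUmem k v₁).2 ⟨hv₁, hk⟩⟩
      · rintro ⟨k, hk⟩
        exact ((hUmem k v₁).1 hk).1
    obtain ⟨k, hk⟩ := hirr₁ n
      (fun k => varietyOf (S₁ ∪ ⋃ v₂ ∈ V₂, wsubst (pairWord₁ v₂) '' S k))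
      (fun k => ⟨_, rfl⟩) (fun k v₁ hv₁ => ((hUmem k v₁).1 hv₁).1) hun₁
    refine ⟨k, Set.Subset.antisymm (hWsub k) ?_⟩
    intro v hv
    have h1 : (fun i => v (Fin.castAdd d₂ i)) ∈ V₁ := hv.1
    have h2 : (fun j => v (Fin.natAdd d₁ j)) ∈ V₂ := hv.2
    have h3 : (fun i => v (Fin.castAdd d₂ i)) ∈
        varietyOf (S₁ ∪ ⋃ v₂ ∈ V₂, wsubst (pairWord₁ v₂) '' S k) := hk.symm ▸ h1
    have h4 := ((hUmem k _).1 h3).2 _ h2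
    rwa [append_comp v] at h4
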